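/- The series ∑_{k=1}^∞ h_k²/k² equals (45/16)·ζ(4), where h_k = ∑_{j=1}^k 1/(2j−1). -/

import Mathlib

open scoped BigOperators
open Real
open scoped ENNReal

noncomputable def cb (k : ℕ) : ℝ := (Nat.choose (2*k) k : ℝ) / 4^k

noncomputable def H (k : ℕ) : ℝ := ∑ j ∈ Finset.range k, (1:ℝ)/(j+1)

noncomputable def oh (k : ℕ) : ℝ := ∑ j ∈ Finset.range k, (1:ℝ)/(2*j+1)

lemma s19_oh_nonneg (k : ℕ) : 0 ≤ oh k := by
  unfold oh
  positivity

-- partial fraction finite-sum identity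
lemma s19_L1 (k : ℕ) :
    ∑ m ∈ Finset.range (k+1), (1:ℝ)/((2*(m:ℝ)+1)*(2*((k:ℝ)-(m:ℝ))+1))
      = oh (k+1) / ((k:ℝ)+1) := by
  have hrefl : ∑ m ∈ Finset.range (k+1), (1:ℝ)/(2*((k:ℝ)-(m:ℝ))+1) = oh (k+1) := by
    rw [oh, ← Finset.sum_range_reflect (fun m => (1:ℝ)/(2*(m:ℝ)+1)) (k+1)]
    apply Finset.sum_congr rfl
    intro m hm
    have hm' : m ≤ k := by simpa [Nat.lt_succ_iff] using hm
    have h1 : k + 1 - 1 - m = k - m := by omega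
    have h2 : ((k - m : ℕ) : ℝ) = (k:ℝ) - m := by
      rw [Nat.cast_sub hm']
    simp only [h1, h2]
  have hterm : ∀ m ∈ Finset.range (k+1),
      (1:ℝ)/((2*(m:ℝ)+1)*(2*((k:ℝ)-(m:ℝ))+1))
        = (1/(2*(k:ℝ)+2)) * ((1:ℝ)/(2*(m:ℝ)+1) + (1:ℝ)/(2*((k:ℝ)-(m:ℝ))+1)) := by
    intro m hm
    have hm' : m ≤ k := by simpa [Nat.lt_succ_iff] using hm
    have hmk : (m:ℝ) ≤ k := by exact_mod_cast hm'
    have h1 : (0:ℝ) < 2*(m:ℝ)+1 := by positivity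
    have h2 : (0:ℝ) < 2*((k:ℝ)-(m:ℝ))+1 := by nlinarith
    field_simp
    ring
  rw [Finset.sum_congr rfl hterm, ← Finset.mul_sum, Finset.sum_add_distrib, hrefl]
  have : ∑ m ∈ Finset.range (k+1), (1:ℝ)/(2*(m:ℝ)+1) = oh (k+1) := rfl
  rw [this]
  have hk : (0:ℝ) < (k:ℝ)+1 := by positivity
  field_simp
  ring

lemma s19_L2 (D : ℕ) (hD : 0 < D) :
    HasSum (fun p : ℕ => (1:ℝ)/((2*(p:ℝ)+1)*(2*(p:ℝ)+2*(D:ℝ)+1)))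
      (oh D / (2*(D:ℝ))) := by
  set g : ℕ → ℝ := fun p => (1:ℝ)/(2*(p:ℝ)+1) with hg
  have hDR : (0:ℝ) < (D:ℝ) := by exact_mod_cast hD
  rw [hasSum_iff_tendsto_nat_of_nonneg (fun p => by positivity)]
  have key : ∀ N, ∑ p ∈ Finset.range N, (1:ℝ)/((2*(p:ℝ)+1)*(2*(p:ℝ)+2*(D:ℝ)+1))
      = (1/(2*(D:ℝ))) * (oh D - ∑ p ∈ Finset.range D, g (N+p)) := by
    intro N
    have t1 : ∀ p ∈ Finset.range N, (1:ℝ)/((2*(p:ℝ)+1)*(2*(p:ℝ)+2*(D:ℝ)+1))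
        = (1/(2*(D:ℝ))) * (g p - g (p+D)) := by
      intro p _
      have h1 : (0:ℝ) < 2*(p:ℝ)+1 := by positivity
      have h2 : (0:ℝ) < 2*(p:ℝ)+2*(D:ℝ)+1 := by positivity
      have : ((p+D : ℕ) : ℝ) = (p:ℝ) + D := by push_cast; ring
      simp only [hg, this]
      field_simp
      ring
    rw [Finset.sum_congr rfl t1, ← Finset.mul_sum, Finset.sum_sub_distrib]
    congr 1
    have e1 : ∑ p ∈ Finset.range (N+D), g p
        = ∑ p ∈ Finset.range N, g p + ∑ p ∈ Finset.range D, g (N+p) :=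
      Finset.sum_range_add g N D
    have e2 : ∑ p ∈ Finset.range (D+N), g p
        = ∑ p ∈ Finset.range D, g p + ∑ p ∈ Finset.range N, g (D+p) :=
      Finset.sum_range_add g D N
    have e3 : ∑ p ∈ Finset.range N, g (p+D) = ∑ p ∈ Finset.range N, g (D+p) := by
      apply Finset.sum_congr rfl; intro p _; rw [add_comm]
    have e4 : (N+D) = (D+N) := by omega
    have : oh D = ∑ p ∈ Finset.range D, g p := rfl
    rw [e3, this]
    rw [e4] at e1
    linarith [e1, e2]
  simp only [key]
  have hlim : Filter.Tendsto (fun N => ∑ p ∈ Finset.range D, g (N+p))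
      Filter.atTop (nhds 0) := by
    have : ∀ p : ℕ, Filter.Tendsto (fun N : ℕ => g (N+p)) Filter.atTop (nhds 0) := by
      intro p
      apply squeeze_zero (fun N => by positivity)
        (g := fun N : ℕ => (1:ℝ)/((N:ℝ)+1))
      · intro N
        have h1 : (0:ℝ) < (N:ℝ)+1 := by positivity
        have h2 : (N:ℝ)+1 ≤ 2*((N+p:ℕ):ℝ)+1 := by push_cast; linarith [Nat.cast_nonneg (α := ℝ) p, Nat.cast_nonneg (α := ℝ) N]
        exact one_div_le_one_div_of_le h1 h2
      · exact tendsto_one_div_add_atTop_nhds_zero_nat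
    have := tendsto_finset_sum (Finset.range D) (fun p _ => this p)
    simpa using this
  have := ((tendsto_const_nhds (x := oh D)).sub hlim).const_mul (1/(2*(D:ℝ)))
  simp only [sub_zero] at this
  have heq : oh D / (2*(D:ℝ)) = 1/(2*(D:ℝ)) * oh D := by ring
  rw [heq]
  exact this

set_option maxHeartbeats 1000000 in

lemma s19_L3 : HasSum (fun p : ℕ => (1:ℝ)/((2*(p:ℝ)+1)^2)) (π^2/8) := by
  have htot : HasSum (fun n : ℕ => (1:ℝ)/(n:ℝ)^2) (π^2/6) := hasSum_zeta_two
  have heven : HasSum (fun n : ℕ => (1:ℝ)/((2*n : ℕ):ℝ)^2) (π^2/24) := by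
    have h := htot.mul_left (1/4 : ℝ)
    have he : (fun n : ℕ => (1/4 : ℝ) * (1/(n:ℝ)^2)) = fun n : ℕ => (1:ℝ)/((2*n : ℕ):ℝ)^2 := by
      funext n
      push_cast
      rw [mul_pow]
      ring
    rw [he] at h
    have : (1/4 : ℝ) * (π^2/6) = π^2/24 := by ring
    rwa [this] at h
  have hodd_summ : Summable (fun n : ℕ => (1:ℝ)/((2*n+1 : ℕ):ℝ)^2) := by
    have hinj : Function.Injective (fun n : ℕ => 2*n+1) := by
      intro a b h
      simpa using h
    exact htot.summable.comp_injective hinj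
  obtain ⟨b, hb⟩ := hodd_summ
  have hcomb := HasSum.even_add_odd (f := fun n : ℕ => (1:ℝ)/(n:ℝ)^2) heven hb
  have hbval : b = π^2/8 := by
    have := hcomb.unique htot
    linarith
  rw [hbval] at hb
  convert hb using 2 with p
  push_cast
  ring



-- step inequality for the rpow induction
lemma s19_step (k : ℕ) :
    4*(k:ℝ)^((1:ℝ)/4) + ((k:ℝ)+1)^(-(3:ℝ)/4) ≤ 4*((k:ℝ)+1)^((1:ℝ)/4) := by
  set x : ℝ := (k:ℝ)+1 with hx
  have hx0 : (0:ℝ) < x := by positivity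
  have hk0 : (0:ℝ) ≤ (k:ℝ) := Nat.cast_nonneg k
  have hgm : (k:ℝ)^((1:ℝ)/4) * x^((3:ℝ)/4) ≤ (1/4)*(k:ℝ) + (3/4)*x :=
    Real.geom_mean_le_arith_mean2_weighted (by norm_num) (by norm_num) hk0 hx0.le
      (by norm_num)
  have h34 : (0:ℝ) < x^((3:ℝ)/4) := Real.rpow_pos_of_pos hx0 _
  rw [← mul_le_mul_iff_of_pos_right h34]
  have e1 : x^((1:ℝ)/4) * x^((3:ℝ)/4) = x := by
    rw [← Real.rpow_add hx0]
    norm_num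
  have e2 : x^(-(3:ℝ)/4) * x^((3:ℝ)/4) = 1 := by
    rw [← Real.rpow_add hx0]
    norm_num
  calc (4*(k:ℝ)^((1:ℝ)/4) + x^(-(3:ℝ)/4)) * x^((3:ℝ)/4)
      = 4*((k:ℝ)^((1:ℝ)/4) * x^((3:ℝ)/4)) + x^(-(3:ℝ)/4) * x^((3:ℝ)/4) := by ring
    _ ≤ 4*((1/4)*(k:ℝ) + (3/4)*x) + 1 := by rw [e2]; nlinarith
    _ = 4*x := by rw [hx]; ring
    _ = 4*(x^((1:ℝ)/4) * x^((3:ℝ)/4)) := by rw [e1]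
    _ = 4*x^((1:ℝ)/4) * x^((3:ℝ)/4) := by ring

lemma s19_sum_rpow_le (k : ℕ) :
    ∑ j ∈ Finset.range k, ((j:ℝ)+1)^(-(3:ℝ)/4) ≤ 4*(k:ℝ)^((1:ℝ)/4) := by
  induction k with
  | zero => simp
  | succ n ih =>
    rw [Finset.sum_range_succ]
    have := s19_step n
    push_cast
    linarith

lemma s19_oh_le (k : ℕ) : oh k ≤ 4*(k:ℝ)^((1:ℝ)/4) := by
  refine le_trans ?_ (s19_sum_rpow_le k)
  apply Finset.sum_le_sum
  intro j _
  have h1 : (0:ℝ) < (j:ℝ)+1 := by positivity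
  have h2 : ((j:ℝ)+1)^((3:ℝ)/4) ≤ 2*(j:ℝ)+1 := by
    calc ((j:ℝ)+1)^((3:ℝ)/4) ≤ ((j:ℝ)+1)^((1:ℝ)) := by
          apply Real.rpow_le_rpow_of_exponent_le (by linarith [Nat.cast_nonneg (α := ℝ) j])
          norm_num
      _ = (j:ℝ)+1 := Real.rpow_one _
      _ ≤ 2*(j:ℝ)+1 := by linarith [Nat.cast_nonneg (α := ℝ) j]
  have h3 : (0:ℝ) < ((j:ℝ)+1)^((3:ℝ)/4) := Real.rpow_pos_of_pos h1 _
  rw [show (-(3:ℝ)/4) = -((3:ℝ)/4) by norm_num, Real.rpow_neg h1.le, ← one_div]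
  exact one_div_le_one_div_of_le h3 h2

lemma s19_L4 : Summable (fun k : ℕ => (oh (k+1))^2/((k:ℝ)+1)^2) := by
  have hbig : Summable (fun k : ℕ => 16*((k:ℝ)+1)^(-(3:ℝ)/2)) := by
    have h1 : Summable (fun n : ℕ => 1/((n:ℝ)^((3:ℝ)/2))) :=
      Real.summable_one_div_nat_rpow.mpr (by norm_num)
    have h2 : Summable (fun n : ℕ => 1/(((n+1 : ℕ):ℝ)^((3:ℝ)/2))) :=
      h1.comp_injective (add_left_injective 1)
    refine Summable.mul_left _ (?_ : Summable (fun n : ℕ => ((n:ℝ)+1)^(-(3:ℝ)/2)))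
    convert h2 using 2 with n
    rw [show (-(3:ℝ)/2) = -((3:ℝ)/2) by norm_num, Real.rpow_neg (by positivity : (0:ℝ) ≤ (n:ℝ)+1), ← one_div]
    push_cast
    norm_num
  apply Summable.of_nonneg_of_le (fun k => by positivity) _ hbig
  intro k
  have h1 : (0:ℝ) < (k:ℝ)+1 := by positivity
  have hle := s19_oh_le (k+1)
  have hnn := s19_oh_nonneg (k+1)
  have hcast : ((k+1 : ℕ):ℝ) = (k:ℝ)+1 := by push_cast; ring
  rw [hcast] at hle
  have hsq : (oh (k+1))^2 ≤ 16*((k:ℝ)+1)^((1:ℝ)/2) := by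
    have h2 : (oh (k+1))^2 ≤ (4*((k:ℝ)+1)^((1:ℝ)/4))^2 := by
      apply pow_le_pow_left₀ hnn hle
    refine h2.trans_eq ?_
    rw [mul_pow, ← Real.rpow_natCast (((k:ℝ)+1)^((1:ℝ)/4)) 2, ← Real.rpow_mul h1.le]
    norm_num
  rw [div_le_iff₀ (by positivity)]
  calc (oh (k+1))^2 ≤ 16*((k:ℝ)+1)^((1:ℝ)/2) := hsq
    _ = 16*((k:ℝ)+1)^(-(3:ℝ)/2) * ((k:ℝ)+1)^2 := by
        rw [mul_assoc, ← Real.rpow_natCast ((k:ℝ)+1) 2, ← Real.rpow_add h1]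
        norm_num

noncomputable def s19F : ℤ → ℝ≥0∞ := fun z =>
  if 0 ≤ z then ENNReal.ofReal (1/(2*(z:ℝ)+1)) else 0

lemma s19F_of_nonneg {z : ℤ} (h : 0 ≤ z) :
    s19F z = ENNReal.ofReal (1/(2*(z:ℝ)+1)) := if_pos h

lemma s19F_neg {z : ℤ} (h : z < 0) : s19F z = 0 := if_neg (not_le.2 h)

lemma s19F_nat (n : ℕ) : s19F (n:ℤ) = ENNReal.ofReal (1/(2*(n:ℝ)+1)) := by
  rw [s19F_of_nonneg (Int.ofNat_nonneg n)]
  norm_num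

noncomputable def s19A (k : ℤ) : ℝ≥0∞ := ∑' m : ℤ, s19F m * s19F (k - m)
noncomputable def s19C (d : ℤ) : ℝ≥0∞ := ∑' p : ℤ, s19F p * s19F (p + d)

noncomputable def s19T : ℝ≥0∞ :=
  ∑' x : ℤ×ℤ×ℤ, s19F x.1 * s19F x.2.1 * s19F x.2.2 * s19F (x.1 + x.2.1 - x.2.2)

def s19e1 : (ℤ×ℤ×ℤ) ≃ (ℤ×ℤ×ℤ) where
  toFun x := (x.2.1, x.1 - x.2.1, x.2.2)
  invFun y := (y.1 + y.2.1, y.1, y.2.2)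
  left_inv x := by
    obtain ⟨k, m, p⟩ := x
    simp
  right_inv y := by
    obtain ⟨m, n, p⟩ := y
    simp

def s19e2 : (ℤ×ℤ×ℤ) ≃ (ℤ×ℤ×ℤ) where
  toFun x := (x.2.1 + x.1, x.2.2, x.2.1)
  invFun y := (y.1 - y.2.2, y.2.2, y.2.1)
  left_inv x := by
    obtain ⟨d, p, n⟩ := x
    simp
  right_inv y := by
    obtain ⟨m, n, p⟩ := y
    simp

lemma s19_GA : s19T = ∑' k : ℤ, (s19A k)^2 := by
  rw [s19T, ← Equiv.tsum_eq s19e1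
    (fun x : ℤ×ℤ×ℤ => s19F x.1 * s19F x.2.1 * s19F x.2.2 * s19F (x.1 + x.2.1 - x.2.2))]
  have hterm : ∀ x : ℤ×ℤ×ℤ,
      s19F (s19e1 x).1 * s19F (s19e1 x).2.1 * s19F (s19e1 x).2.2
        * s19F ((s19e1 x).1 + (s19e1 x).2.1 - (s19e1 x).2.2)
      = (s19F x.2.1 * s19F (x.1 - x.2.1)) * (s19F x.2.2 * s19F (x.1 - x.2.2)) := by
    intro ⟨k, m, p⟩
    show s19F m * s19F (k-m) * s19F p * s19F (m + (k-m) - p) = _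
    rw [show m + (k-m) - p = k - p by ring]
    ring
  rw [tsum_congr hterm, ENNReal.tsum_prod']
  apply tsum_congr
  intro k
  rw [ENNReal.tsum_prod']
  have : ∀ m : ℤ, ∑' p : ℤ, (s19F m * s19F (k - m)) * (s19F p * s19F (k - p))
      = (s19F m * s19F (k - m)) * s19A k := by
    intro m
    rw [ENNReal.tsum_mul_left]
    rfl
  rw [tsum_congr this, ENNReal.tsum_mul_right]
  rw [sq]
  rfl

lemma s19_GB : s19T = ∑' d : ℤ, (s19C d)^2 := by
  rw [s19T, ← Equiv.tsum_eq s19e2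
    (fun x : ℤ×ℤ×ℤ => s19F x.1 * s19F x.2.1 * s19F x.2.2 * s19F (x.1 + x.2.1 - x.2.2))]
  have hterm : ∀ x : ℤ×ℤ×ℤ,
      s19F (s19e2 x).1 * s19F (s19e2 x).2.1 * s19F (s19e2 x).2.2
        * s19F ((s19e2 x).1 + (s19e2 x).2.1 - (s19e2 x).2.2)
      = (s19F x.2.1 * s19F (x.2.1 + x.1)) * (s19F x.2.2 * s19F (x.2.2 + x.1)) := by
    intro ⟨d, p, n⟩
    show s19F (p+d) * s19F n * s19F p * s19F ((p+d) + n - p) = _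
    rw [show (p+d) + n - p = n + d by ring]
    ring
  rw [tsum_congr hterm, ENNReal.tsum_prod']
  apply tsum_congr
  intro d
  rw [ENNReal.tsum_prod']
  have : ∀ p : ℤ, ∑' n : ℤ, (s19F p * s19F (p + d)) * (s19F n * s19F (n + d))
      = (s19F p * s19F (p + d)) * s19C d := by
    intro p
    rw [ENNReal.tsum_mul_left]
    rfl
  rw [tsum_congr this, ENNReal.tsum_mul_right]
  rw [sq]
  rfl














lemma s19A_neg {k : ℤ} (hk : k < 0) : s19A k = 0 := by
  rw [s19A]
  rw [ENNReal.tsum_eq_zero]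
  intro m
  rcases lt_or_ge m 0 with h|h
  · rw [s19F_neg h, zero_mul]
  · rw [s19F_neg (show k - m < 0 by omega), mul_zero]

lemma s19A_nat (k : ℕ) : s19A (k:ℤ) = ENNReal.ofReal (oh (k+1) / ((k:ℝ)+1)) := by
  have hsupp : ∀ m : ℤ,
      m ∉ (Finset.range (k+1)).map ⟨(fun n : ℕ => (n:ℤ)), Nat.cast_injective⟩ →
      s19F m * s19F ((k:ℤ) - m) = 0 := by
    intro m hm
    simp only [Finset.mem_map, Finset.mem_range, Function.Embedding.coeFn_mk] at hm
    rcases lt_or_ge m 0 with h|h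
    · rw [s19F_neg h, zero_mul]
    · rcases lt_or_ge (k:ℤ) m with h2|h2
      · rw [s19F_neg (show (k:ℤ) - m < 0 by omega), mul_zero]
      · exact (hm ⟨m.toNat, by omega, by omega⟩).elim
  rw [s19A, tsum_eq_sum hsupp, Finset.sum_map]
  simp only [Function.Embedding.coeFn_mk]
  have hterm : ∀ n ∈ Finset.range (k+1),
      s19F (n:ℤ) * s19F ((k:ℤ) - (n:ℤ))
        = ENNReal.ofReal ((1:ℝ)/((2*(n:ℝ)+1)*(2*((k:ℝ)-(n:ℝ))+1))) := by
    intro n hn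
    have hn' : n ≤ k := by simpa [Nat.lt_succ_iff] using hn
    have h2 : s19F ((k:ℤ) - (n:ℤ)) = ENNReal.ofReal (1/(2*((k:ℝ)-(n:ℝ))+1)) := by
      rw [s19F_of_nonneg (by omega)]
      push_cast
      ring_nf
    rw [s19F_nat, h2, ← ENNReal.ofReal_mul (p := 1/(2*(n:ℝ)+1)) (by positivity)]
    rw [div_mul_div_comm, one_mul]
  rw [Finset.sum_congr rfl hterm,
    ← ENNReal.ofReal_sum_of_nonneg (fun i hi => by
      have hik : (i:ℝ) ≤ k := by
        exact_mod_cast Nat.lt_succ_iff.mp (Finset.mem_range.mp hi)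
      have hpos : (0:ℝ) < 2*((k:ℝ)-(i:ℝ))+1 := by linarith
      have hpos2 : (0:ℝ) < 2*(i:ℝ)+1 := by positivity
      positivity), s19_L1 k]

lemma s19C_nat (d : ℕ) :
    s19C (d:ℤ) = ∑' n : ℕ,
      ENNReal.ofReal ((1:ℝ)/((2*(n:ℝ)+1)*(2*(n:ℝ)+2*(d:ℝ)+1))) := by
  rw [s19C, ← tsum_nat_add_neg_add_one ENNReal.summable]
  apply tsum_congr
  intro n
  have h0 : s19F (-((n:ℤ) + 1)) = 0 := s19F_neg (by omega)
  rw [h0, zero_mul, add_zero, s19F_nat,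
    s19F_of_nonneg (by omega : (0:ℤ) ≤ (n:ℤ) + (d:ℤ)),
    ← ENNReal.ofReal_mul (p := 1/(2*(n:ℝ)+1)) (by positivity)]
  congr 1
  rw [div_mul_div_comm, one_mul]
  push_cast
  ring_nf

lemma s19C_symm (z : ℤ) : s19C (-z) = s19C z := by
  rw [s19C, s19C, ← Equiv.tsum_eq (Equiv.addRight z) (fun p => s19F p * s19F (p + -z))]
  apply tsum_congr
  intro p
  show s19F (p + z) * s19F ((p + z) + -z) = s19F p * s19F (p + z)
  rw [show p + z + -z = p by ring, mul_comm]

lemma s19_GAB : (∑' k : ℤ, (s19A k)^2) = ∑' d : ℤ, (s19C d)^2 :=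
  s19_GA.symm.trans s19_GB

lemma s19_sq_aux (a b : ℝ) (hb : b ≠ 0) : (a/(2*b))^2 = (1/4)*(a^2/b^2) := by
  rw [div_pow, mul_pow, mul_comm ((2:ℝ)^2) (b^2), ← div_div]
  norm_num
  ring

lemma s19C_zero : s19C 0 = ENNReal.ofReal (π^2/8) := by
  have h := s19C_nat 0
  rw [show ((0:ℕ):ℤ) = 0 from rfl] at h
  rw [h]
  have hterm : ∀ n : ℕ, ENNReal.ofReal ((1:ℝ)/((2*(n:ℝ)+1)*(2*(n:ℝ)+2*((0:ℕ):ℝ)+1)))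
      = ENNReal.ofReal ((1:ℝ)/((2*(n:ℝ)+1)^2)) := by
    intro n
    congr 1
    push_cast
    ring
  rw [tsum_congr hterm,
    ← ENNReal.ofReal_tsum_of_nonneg (fun n => by positivity) s19_L3.summable,
    s19_L3.tsum_eq]

lemma s19C_succ (d : ℕ) :
    s19C ((d:ℤ)+1) = ENNReal.ofReal (oh (d+1) / (2*((d:ℝ)+1))) := by
  have h := s19C_nat (d+1)
  have hc : (((d+1:ℕ)):ℤ) = (d:ℤ)+1 := by push_cast; ring
  rw [hc] at h
  rw [h]
  have hsum : HasSum (fun n : ℕ => (1:ℝ)/((2*(n:ℝ)+1)*(2*(n:ℝ)+2*((d+1:ℕ):ℝ)+1)))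
      (oh (d+1) / (2*((d:ℝ)+1))) := by
    have h2 := s19_L2 (d+1) (Nat.succ_pos d)
    have h3 : (((d+1:ℕ)):ℝ) = (d:ℝ)+1 := by push_cast; ring
    rw [h3] at h2
    convert h2 using 3 <;> rw [h3]
  rw [← ENNReal.ofReal_tsum_of_nonneg (fun n => by positivity) hsum.summable,
    hsum.tsum_eq]

lemma s19_main : (∑' k : ℕ, (oh (k+1))^2/((k:ℝ)+1)^2) = π^4/32 := by
  set S : ℝ := ∑' k : ℕ, (oh (k+1))^2/((k:ℝ)+1)^2 with hS
  have hS0 : 0 ≤ S := tsum_nonneg (fun k => by positivity)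
  have hLHS : (∑' k : ℤ, (s19A k)^2) = ENNReal.ofReal S := by
    rw [← tsum_nat_add_neg_add_one ENNReal.summable]
    have h1 : ∀ n : ℕ, (s19A (n:ℤ))^2 + (s19A (-((n:ℤ)+1)))^2
        = ENNReal.ofReal ((oh (n+1))^2/((n:ℝ)+1)^2) := by
      intro n
      rw [s19A_neg (show -((n:ℤ)+1) < 0 by omega), s19A_nat n,
        zero_pow two_ne_zero, add_zero,
        ← ENNReal.ofReal_pow (div_nonneg (s19_oh_nonneg _) (by positivity)), div_pow]
    rw [tsum_congr h1,
      ← ENNReal.ofReal_tsum_of_nonneg (fun n => by positivity) s19_L4]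
  have hC2 : ∀ n : ℕ, (s19C ((n:ℤ)+1))^2
      = ENNReal.ofReal ((1/4) * ((oh (n+1))^2/((n:ℝ)+1)^2)) := by
    intro n
    rw [s19C_succ n, ← ENNReal.ofReal_pow (div_nonneg (s19_oh_nonneg _) (by positivity))]
    congr 1
    exact s19_sq_aux (oh (n+1)) ((n:ℝ)+1) (by positivity)
  have hQ : (∑' n : ℕ, (s19C ((n:ℤ)+1))^2) = ENNReal.ofReal (S/4) := by
    rw [tsum_congr hC2,
      ← ENNReal.ofReal_tsum_of_nonneg (fun n => by positivity) (s19_L4.mul_left (1/4)),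
      tsum_mul_left]
    congr 1
    ring
  have hRHS : (∑' d : ℤ, (s19C d)^2) = ENNReal.ofReal (π^4/64 + S/2) := by
    rw [← tsum_nat_add_neg_add_one ENNReal.summable]
    have h1 : ∀ n : ℕ, (s19C (n:ℤ))^2 + (s19C (-((n:ℤ)+1)))^2
        = (s19C (n:ℤ))^2 + (s19C ((n:ℤ)+1))^2 := by
      intro n
      rw [s19C_symm ((n:ℤ)+1)]
    rw [tsum_congr h1, ENNReal.tsum_add]
    have h2 : (∑' n : ℕ, (s19C (n:ℤ))^2)
        = (s19C 0)^2 + ∑' n : ℕ, (s19C ((n:ℤ)+1))^2 := by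
      rw [tsum_eq_zero_add' ENNReal.summable]
      simp only [Nat.cast_zero, Nat.cast_add, Nat.cast_one]
    rw [h2, hQ, s19C_zero, ← ENNReal.ofReal_pow (by positivity)]
    have hS4 : (0:ℝ) ≤ S/4 := by linarith
    rw [add_assoc, ← ENNReal.ofReal_add hS4 hS4,
      ← ENNReal.ofReal_add (by positivity) (by linarith)]
    congr 1
    ring
  have := hLHS.symm.trans (s19_GAB.trans hRHS)
  rw [ENNReal.ofReal_eq_ofReal_iff hS0 (by positivity)] at this
  linarith



theorem stmt_19 :
    ((∑' k : ℕ, (oh (k+1))^2/((k:ℝ)+1)^2 : ℝ) : ℂ)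
      = (45/16) * riemannZeta 4 := by
  rw [s19_main, riemannZeta_four]
  push_cast
  ring
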